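/- arXiv:2301.12784 — 3 statements merged into one kernel-verified Lean document; each statement's English description precedes it below -/
import Mathlib

section
/- Let n ≥ 5 be an integer and let 𝒢 = K₂ × K_n be the direct product of the complete graph on 2 vertices with the complete graph on n vertices. Then for every vertex subset A of 𝒢 with 2 ≤ |A| ≤ 2n − 2, the number of edges of 𝒢 with exactly one endpoint in A satisfies |[A, V(𝒢) \ A]| ≥ 2(n − 2); moreover, equality holds if and only if either (i) |A| = 2 and the subgraph of 𝒢 induced by A is isomorphic to K₂, or (ii) |A| = 2n − 2 and the subgraph of 𝒢 induced by V(𝒢) \ A is isomorphic to K₂. -/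
open SimpleGraph

/-- The direct (tensor/Kronecker) product of two simple graphs:
`(u₁, v₁)` and `(u₂, v₂)` are adjacent iff `u₁u₂ ∈ E(G)` and `v₁v₂ ∈ E(H)`. -/
def tensorProd {α β : Type*} (G : SimpleGraph α) (H : SimpleGraph β) :
    SimpleGraph (α × β) where
  Adj x y := G.Adj x.1 y.1 ∧ H.Adj x.2 y.2
  symm := ⟨fun _ _ h => ⟨h.1.symm, h.2.symm⟩⟩
  loopless := ⟨fun _ h => G.loopless.irrefl _ h.1⟩

/-- The direct product `G × Tₙ` of a simple graph `G` with the total graph `Tₙ`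
(the complete graph `Kₙ` with a loop added at every vertex):  since `Tₙ` has all
possible edges and loops, `(u₁, v₁)` is adjacent to `(u₂, v₂)` iff `u₁u₂ ∈ E(G)`. -/
def totalProd {α : Type*} (G : SimpleGraph α) (n : ℕ) :
    SimpleGraph (α × Fin n) where
  Adj x y := G.Adj x.1 y.1
  symm := ⟨fun _ _ h => h.symm⟩
  loopless := ⟨fun _ h => G.loopless.irrefl _ h⟩

/-- The direct product `K₂ × Kₙ`. -/
def K2timesKn (n : ℕ) : SimpleGraph (Fin 2 × Fin n) :=
  tensorProd (completeGraph (Fin 2)) (completeGraph (Fin n))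

/-- The direct product `K₂ × Tₙ` (isomorphic to the complete bipartite graph `K_{n,n}`). -/
def K2timesTn (n : ℕ) : SimpleGraph (Fin 2 × Fin n) :=
  totalProd (completeGraph (Fin 2)) n

/-- `[A, V ∖ A]` : the set of edges of `G` with exactly one endpoint in `A`. -/
def cutEdges {α : Type*} (G : SimpleGraph α) (A : Set α) : Set (Sym2 α) :=
  {e | e ∈ G.edgeSet ∧ ∃ u v, e = s(u, v) ∧ u ∈ A ∧ v ∉ A}

/-- `F` is an edge-cut of `G`: a set of edges whose deletion disconnects `G`. -/
def IsEdgeCut {α : Type*} (G : SimpleGraph α) (F : Set (Sym2 α)) : Prop :=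
  F ⊆ G.edgeSet ∧ ¬ (G.deleteEdges F).Connected

/-- The edge-connectivity `λ(G)`: the minimum cardinality of an edge-cut. -/
noncomputable def edgeConn {α : Type*} (G : SimpleGraph α) : ℕ :=
  sInf {k | ∃ F : Finset (Sym2 α), IsEdgeCut G ↑F ∧ F.card = k}

/-- `G` is super edge-connected (super-λ): every minimum edge-cut is exactly the
set of edges incident with some vertex. -/
def SuperEdgeConnected {α : Type*} (G : SimpleGraph α) : Prop :=
  ∀ F : Finset (Sym2 α), IsEdgeCut G ↑F → F.card = edgeConn G →
    ∃ v, (F : Set (Sym2 α)) = G.incidenceSet v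

/-- `F` is a restricted edge-cut of `G`: its deletion disconnects `G` and every
connected component of `G − F` has at least two vertices. -/
def IsRestrictedEdgeCut {α : Type*} (G : SimpleGraph α) (F : Set (Sym2 α)) : Prop :=
  F ⊆ G.edgeSet ∧ ¬ (G.deleteEdges F).Connected ∧
    ∀ c : (G.deleteEdges F).ConnectedComponent, c.supp.Nontrivial

/-- The restricted edge-connectivity `λ'(G) : ℕ∞`: the minimum cardinality of a
restricted edge-cut, and `+∞` (`⊤`) if no restricted edge-cut exists. -/
noncomputable def restrictedEdgeConn {α : Type*} (G : SimpleGraph α) : ℕ∞ :=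
  sInf {k : ℕ∞ | ∃ F : Finset (Sym2 α), IsRestrictedEdgeCut G ↑F ∧ (F.card : ℕ∞) = k}

/-- `G` is super restricted edge-connected (super-λ'): every minimum restricted
edge-cut isolates an edge, i.e. some component of `G − F` is a single edge. -/
def SuperRestrictedEdgeConnected {α : Type*} (G : SimpleGraph α) : Prop :=
  ∀ F : Finset (Sym2 α), IsRestrictedEdgeCut G ↑F →
    (F.card : ℕ∞) = restrictedEdgeConn G →
    ∃ u v, (G.deleteEdges ↑F).Adj u v ∧
      ((G.deleteEdges ↑F).connectedComponentMk u).supp = {u, v}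

/-- The minimum edge-degree `ξ(G) = min { d(u) + d(v) − 2 : uv ∈ E(G) }`. -/
noncomputable def minEdgeDegree {α : Type*} (G : SimpleGraph α) : ℕ :=
  sInf {k | ∃ u v, G.Adj u v ∧ (G.neighborSet u).ncard + (G.neighborSet v).ncard - 2 = k}

section Helpers

open Finset

variable {n : ℕ}

/-- The slice of `A` on side `i`. -/
def SS (A : Finset (Fin 2 × Fin n)) (i : Fin 2) : Finset (Fin n) :=
  Finset.univ.filter (fun j => (i, j) ∈ A)

lemma mem_SS {A : Finset (Fin 2 × Fin n)} {i : Fin 2} {j : Fin n} :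
    j ∈ SS A i ↔ (i, j) ∈ A := by simp [SS]

lemma adj_iff {x y : Fin 2 × Fin n} :
    (K2timesKn n).Adj x y ↔ x.1 ≠ y.1 ∧ x.2 ≠ y.2 := Iff.rfl

instance : DecidableRel (K2timesKn n).Adj := fun x y =>
  decidable_of_iff (x.1 ≠ y.1 ∧ x.2 ≠ y.2) adj_iff.symm

/-- Ordered cut pairs. -/
def cutPairs (A : Finset (Fin 2 × Fin n)) : Finset ((Fin 2 × Fin n) × (Fin 2 × Fin n)) :=
  Finset.univ.filter (fun p => (K2timesKn n).Adj p.1 p.2 ∧ p.1 ∈ A ∧ p.2 ∉ A)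

lemma cut_ncard (A : Finset (Fin 2 × Fin n)) :
    (cutEdges (K2timesKn n) ↑A).ncard = (cutPairs A).card := by
  have himg : cutEdges (K2timesKn n) ↑A = Function.uncurry Sym2.mk '' ↑(cutPairs A) := by
    ext e
    constructor
    · rintro ⟨he, u, v, rfl, hu, hv⟩
      exact ⟨(u, v), by simpa [cutPairs] using ⟨(SimpleGraph.mem_edgeSet _).mp he, hu, hv⟩, rfl⟩
    · rintro ⟨⟨u, v⟩, hp, rfl⟩
      simp only [cutPairs, Finset.coe_filter, Set.mem_setOf_eq] at hp
      exact ⟨(SimpleGraph.mem_edgeSet _).mpr hp.2.1, u, v, rfl, hp.2.2.1, hp.2.2.2⟩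
  rw [himg, Set.ncard_image_of_injOn, Set.ncard_coe_finset]
  rintro ⟨u, v⟩ hp ⟨u', v'⟩ hp' he
  simp only [cutPairs, Finset.coe_filter, Set.mem_setOf_eq] at hp hp'
  change s((u, v).1, (u, v).2) = s((u', v').1, (u', v').2) at he
  rw [Sym2.mk_eq_mk_iff] at he
  rcases he with h | h
  · exact h
  · simp only [Prod.swap_prod_mk, Prod.mk.injEq] at h
    exact absurd (h.1 ▸ hp.2.2.1) hp'.2.2.2

end Helpers
section Helpers2

open Finset

variable {n : ℕ}

def TT (A : Finset (Fin 2 × Fin n)) (i : Fin 2) : Finset (Fin n × Fin n) :=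
  ((SS A i) ×ˢ (SS A (i + 1))ᶜ).filter (fun p => p.1 ≠ p.2)

def emb (n : ℕ) (i : Fin 2) : Fin n × Fin n ↪ (Fin 2 × Fin n) × (Fin 2 × Fin n) :=
  ⟨fun p => ((i, p.1), (i + 1, p.2)), by
    intro p q h
    simp only [Prod.mk.injEq] at h
    exact Prod.ext h.1.2 h.2.2⟩

lemma cutPairs_card (A : Finset (Fin 2 × Fin n)) :
    (cutPairs A).card = (TT A 0).card + (TT A 1).card := by
  have hsplit : cutPairs A = (TT A 0).map (emb n 0) ∪ (TT A 1).map (emb n 1) := by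
    ext ⟨⟨i, j⟩, ⟨i', k⟩⟩
    simp only [cutPairs, TT, emb, Finset.mem_filter, Finset.mem_univ, true_and,
      Finset.mem_union, Finset.mem_map, Finset.mem_product, Finset.mem_compl,
      Function.Embedding.coeFn_mk, Prod.mk.injEq, Prod.exists, adj_iff, mem_SS]
    fin_cases i <;> fin_cases i' <;> simp <;> aesop
  rw [hsplit, Finset.card_union_of_disjoint, Finset.card_map, Finset.card_map]
  rw [Finset.disjoint_left]
  rintro p hp hp'
  simp only [Finset.mem_map, emb, Function.Embedding.coeFn_mk] at hp hp'
  obtain ⟨q, _, rfl⟩ := hp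
  obtain ⟨q', _, h⟩ := hp'
  exact absurd (congrArg (fun x => x.1.1) h) (show (1 : Fin 2) ≠ 0 by decide)

lemma TT_card (A : Finset (Fin 2 × Fin n)) (i : Fin 2) :
    (TT A i).card + ((SS A i) \ (SS A (i + 1))).card
      = (SS A i).card * (n - (SS A (i + 1)).card) := by
  have h1 : (TT A i).card
      + (((SS A i) ×ˢ (SS A (i + 1))ᶜ).filter (fun p => ¬ p.1 ≠ p.2)).card
      = ((SS A i) ×ˢ (SS A (i + 1))ᶜ).card :=
    Finset.card_filter_add_card_filter_not _
  have h2 : (((SS A i) ×ˢ (SS A (i + 1))ᶜ).filter (fun p => ¬ p.1 ≠ p.2))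
      = ((SS A i) \ (SS A (i + 1))).image (fun j => (j, j)) := by
    ext ⟨j, k⟩
    simp only [Finset.mem_filter, Finset.mem_product, Finset.mem_compl, not_not,
      Finset.mem_image, Finset.mem_sdiff, Prod.mk.injEq]
    constructor
    · rintro ⟨⟨hj, hk⟩, rfl⟩
      exact ⟨j, ⟨hj, hk⟩, rfl, rfl⟩
    · rintro ⟨m, ⟨hm1, hm2⟩, rfl, rfl⟩
      exact ⟨⟨hm1, hm2⟩, rfl⟩
  have h3 : (((SS A i) \ (SS A (i + 1))).image (fun j => (j, j))).card
      = ((SS A i) \ (SS A (i + 1))).card :=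
    Finset.card_image_of_injective _ (fun a b h => by simpa using h)
  rw [Finset.card_product, Finset.card_compl, Fintype.card_fin] at h1
  rw [h2, h3] at h1
  exact h1

lemma card_split (A : Finset (Fin 2 × Fin n)) :
    A.card = (SS A 0).card + (SS A 1).card := by
  have h : A = ((SS A 0).image fun j => ((0 : Fin 2), j))
      ∪ ((SS A 1).image fun j => ((1 : Fin 2), j)) := by
    ext ⟨i, j⟩
    fin_cases i <;> simp [mem_SS]
  have hdisj : Disjoint ((SS A 0).image fun j => ((0 : Fin 2), j))
      ((SS A 1).image fun j => ((1 : Fin 2), j)) := by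
    rw [Finset.disjoint_left]
    rintro ⟨i, j⟩ hp hp'
    simp only [Finset.mem_image] at hp hp'
    obtain ⟨q, _, h1⟩ := hp
    obtain ⟨q', _, h2⟩ := hp'
    rw [← h1] at h2
    simp at h2
  have := congrArg Finset.card h
  rw [Finset.card_union_of_disjoint hdisj,
    Finset.card_image_of_injective _ (fun a b hab => by simpa using hab),
    Finset.card_image_of_injective _ (fun a b hab => by simpa using hab)] at this
  exact this

lemma cut_formula (A : Finset (Fin 2 × Fin n)) :
    ((cutEdges (K2timesKn n) ↑A).ncard : ℤ)
      = ((SS A 0).card + (SS A 1).card) * ((n : ℤ) - 1)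
        - 2 * (SS A 0).card * (SS A 1).card + 2 * ((SS A 0 ∩ SS A 1)).card := by
  have hb : (SS A 1).card ≤ n := by
    simpa using Finset.card_le_univ (SS A 1)
  have ha : (SS A 0).card ≤ n := by
    simpa using Finset.card_le_univ (SS A 0)
  have e01 : ((0 : Fin 2) + 1) = 1 := rfl
  have e10 : ((1 : Fin 2) + 1) = 0 := rfl
  have h0 := TT_card A 0
  have h1 := TT_card A 1
  rw [e01] at h0
  rw [e10] at h1
  have hd0 : ((SS A 0) \ (SS A 1)).card + (SS A 0 ∩ SS A 1).card = (SS A 0).card :=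
    Finset.card_sdiff_add_card_inter _ _
  have hd1 : ((SS A 1) \ (SS A 0)).card + (SS A 1 ∩ SS A 0).card = (SS A 1).card :=
    Finset.card_sdiff_add_card_inter _ _
  rw [Finset.inter_comm] at hd1
  rw [cut_ncard, cutPairs_card]
  have H0 : ((TT A 0).card : ℤ) + ((SS A 0) \ (SS A 1)).card
      = (SS A 0).card * ((n : ℤ) - (SS A 1).card) := by
    zify [hb] at h0
    linarith [h0]
  have H1 : ((TT A 1).card : ℤ) + ((SS A 1) \ (SS A 0)).card
      = (SS A 1).card * ((n : ℤ) - (SS A 0).card) := by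
    zify [ha] at h1
    linarith [h1]
  have HD0 : (((SS A 0) \ (SS A 1)).card : ℤ) + (SS A 0 ∩ SS A 1).card = (SS A 0).card := by
    exact_mod_cast congrArg (Nat.cast : ℕ → ℤ) hd0
  have HD1 : (((SS A 1) \ (SS A 0)).card : ℤ) + (SS A 0 ∩ SS A 1).card = (SS A 1).card := by
    exact_mod_cast congrArg (Nat.cast : ℕ → ℤ) hd1
  push_cast
  linear_combination H0 + H1 - HD0 - HD1

end Helpers2
section Arith

lemma arith {n a b t c : ℤ} (hn : 5 ≤ n) (h2 : 2 ≤ a + b) (h2n : a + b ≤ 2 * n - 2)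
    (hta : t ≤ a) (htb : t ≤ b) (ht0 : 0 ≤ t) (hun : a + b ≤ n + t)
    (hc : c = (a + b) * (n - 1) - 2 * a * b + 2 * t) :
    2 * n - 4 ≤ c ∧ (c = 2 * n - 4 ↔
      (a = 1 ∧ b = 1 ∧ t = 0) ∨ (a = n - 1 ∧ b = n - 1 ∧ t = n - 2)) := by
  have hback : ((a = 1 ∧ b = 1 ∧ t = 0) ∨ (a = n - 1 ∧ b = n - 1 ∧ t = n - 2)) →
      c = 2 * n - 4 := by
    rintro (⟨rfl, rfl, rfl⟩ | ⟨rfl, rfl, rfl⟩) <;> rw [hc] <;> ring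
  by_cases hs : a + b ≤ n
  · have key : 2 * (c - (2 * n - 4))
        = (a + b - 2) * ((2 * n - 4) - (a + b)) + (a - b) ^ 2 + 4 * t := by
      rw [hc]; ring
    have f1 : 0 ≤ a + b - 2 := by linarith
    have f2 : 0 ≤ (2 * n - 4) - (a + b) := by linarith
    have f3 : 0 ≤ (a - b) ^ 2 := sq_nonneg _
    have fp : 0 ≤ (a + b - 2) * ((2 * n - 4) - (a + b)) := mul_nonneg f1 f2
    have hineq : 2 * n - 4 ≤ c := by linarith
    refine ⟨hineq, ?_, hback⟩
    intro heq
    have hz1 : (a + b - 2) * ((2 * n - 4) - (a + b)) = 0 := by linarith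
    have hz2 : (a - b) ^ 2 = 0 := by linarith
    have hz3 : t = 0 := by linarith
    have hab : a = b := by nlinarith [hz2]
    rcases mul_eq_zero.mp hz1 with h | h
    · left; constructor; linarith; constructor; linarith; exact hz3
    · exfalso; linarith
  · have key : 2 * (c - (2 * n - 4))
        = (a + b - 4) * ((2 * n - 2) - (a + b)) + (a - b) ^ 2 + 4 * (t - (a + b - n)) := by
      rw [hc]; ring
    have f1 : 0 ≤ a + b - 4 := by linarith
    have f2 : 0 ≤ (2 * n - 2) - (a + b) := by linarith
    have f3 : 0 ≤ (a - b) ^ 2 := sq_nonneg _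
    have f4 : 0 ≤ t - (a + b - n) := by linarith
    have fp : 0 ≤ (a + b - 4) * ((2 * n - 2) - (a + b)) := mul_nonneg f1 f2
    have hineq : 2 * n - 4 ≤ c := by linarith
    refine ⟨hineq, ?_, hback⟩
    intro heq
    have hz1 : (a + b - 4) * ((2 * n - 2) - (a + b)) = 0 := by linarith
    have hz2 : (a - b) ^ 2 = 0 := by linarith
    have hz3 : t = a + b - n := by linarith
    have hab : a = b := by nlinarith [hz2]
    rcases mul_eq_zero.mp hz1 with h | h
    · exfalso; linarith
    · right; refine ⟨by linarith, by linarith, by linarith⟩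

end Arith
section Struct

open Finset

variable {n : ℕ}

lemma iso_of_pair {α : Type*} {G : SimpleGraph α} {x y : α} (h : G.Adj x y) :
    Nonempty (G.induce {x, y} ≃g completeGraph (Fin 2)) := by
  classical
  have hne : x ≠ y := h.ne
  refine ⟨⟨⟨fun u => if (u : α) = x then 0 else 1,
      fun v => if v = 0 then ⟨x, Or.inl rfl⟩ else ⟨y, Or.inr rfl⟩, ?_, ?_⟩, ?_⟩⟩
  · rintro ⟨u, hu⟩
    rcases hu with rfl | hu
    · simp
    · rw [Set.mem_singleton_iff] at hu
      subst hu
      simp [hne.symm]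
  · intro v
    fin_cases v
    · simp
    · simp [hne.symm]
  · rintro ⟨u, hu⟩ ⟨v, hv⟩
    rw [Set.mem_insert_iff, Set.mem_singleton_iff] at hu hv
    rcases hu with rfl | rfl <;> rcases hv with rfl | rfl <;>
      simp [completeGraph, hne, hne.symm, h, h.symm]

lemma pair_of_iso {α : Type*} {G : SimpleGraph α} {A : Set α}
    (h2 : A.ncard = 2) (h : Nonempty (G.induce A ≃g completeGraph (Fin 2))) :
    ∃ x y, G.Adj x y ∧ A = {x, y} := by
  obtain ⟨e⟩ := h
  have hadj : (G.induce A).Adj (e.symm 0) (e.symm 1) := by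
    rw [← e.map_rel_iff]
    simp [completeGraph]
  have hadj' : G.Adj ((e.symm 0) : α) ((e.symm 1) : α) := hadj
  refine ⟨_, _, hadj', ?_⟩
  have hsub : ({((e.symm 0) : α), ((e.symm 1) : α)} : Set α) ⊆ A := by
    rintro z (rfl | rfl)
    · exact (e.symm 0).2
    · exact (e.symm 1).2
  have hcard : ({((e.symm 0) : α), ((e.symm 1) : α)} : Set α).ncard = 2 :=
    Set.ncard_pair hadj'.ne
  have hfin : A.Finite := by
    by_contra hinf
    rw [Set.Infinite.ncard (by exact hinf)] at h2
    omega
  exact (Set.eq_of_subset_of_ncard_le hsub (by omega) hfin).symm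

lemma fin2cases (i : Fin 2) : i = 0 ∨ i = 1 := by
  rcases i with ⟨iv, h⟩
  interval_cases iv
  · exact Or.inl rfl
  · exact Or.inr rfl

lemma pair_of_config {A : Finset (Fin 2 × Fin n)} (ha : (SS A 0).card = 1)
    (hb : (SS A 1).card = 1) (ht : (SS A 0 ∩ SS A 1).card = 0) :
    ∃ x y, (K2timesKn n).Adj x y ∧ ↑A = ({x, y} : Set (Fin 2 × Fin n)) := by
  obtain ⟨j, hj⟩ := Finset.card_eq_one.mp ha
  obtain ⟨k, hk⟩ := Finset.card_eq_one.mp hb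
  have hjk : j ≠ k := by
    rintro rfl
    rw [hj, hk] at ht
    simp at ht
  refine ⟨(0, j), (1, k), ?_, ?_⟩
  · exact adj_iff.mpr ⟨(by decide : (0 : Fin 2) ≠ 1), hjk⟩
  · ext ⟨i, m⟩
    rw [Finset.mem_coe, ← mem_SS]
    rcases fin2cases i with rfl | rfl
    · rw [hj]; simp [Prod.ext_iff]
    · rw [hk]; simp [Prod.ext_iff]

lemma config_of_pair {A : Finset (Fin 2 × Fin n)} {x y : Fin 2 × Fin n}
    (hadj : (K2timesKn n).Adj x y) (hxy : ↑A = ({x, y} : Set (Fin 2 × Fin n))) :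
    (SS A 0).card = 1 ∧ (SS A 1).card = 1 ∧ (SS A 0 ∩ SS A 1).card = 0 := by
  obtain ⟨x1, x2⟩ := x
  obtain ⟨y1, y2⟩ := y
  obtain ⟨h1, h2⟩ := adj_iff.mp hadj
  simp only at h1 h2
  have hmem : ∀ z : Fin 2 × Fin n, z ∈ A ↔ z = (x1, x2) ∨ z = (y1, y2) := by
    intro z
    rw [← Finset.mem_coe, hxy]
    simp
  have hinter : ∀ u v : Fin n, u ≠ v → (({u} : Finset (Fin n)) ∩ {v}).card = 0 := by
    intro u v huv
    rw [Finset.card_eq_zero]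
    ext m
    simp only [Finset.mem_inter, Finset.mem_singleton, Finset.notMem_empty, iff_false,
      not_and]
    rintro rfl rfl
    exact huv rfl
  rcases fin2cases x1 with rfl | rfl <;> rcases fin2cases y1 with rfl | rfl
  · exact absurd rfl h1
  · have hS0 : SS A 0 = {x2} := by
      ext m; rw [mem_SS, hmem]; simp [Prod.ext_iff]
    have hS1 : SS A 1 = {y2} := by
      ext m; rw [mem_SS, hmem]; simp [Prod.ext_iff]
    rw [hS0, hS1]
    exact ⟨rfl, rfl, hinter _ _ h2⟩
  · have hS0 : SS A 0 = {y2} := by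
      ext m; rw [mem_SS, hmem]; simp [Prod.ext_iff]
    have hS1 : SS A 1 = {x2} := by
      ext m; rw [mem_SS, hmem]; simp [Prod.ext_iff]
    rw [hS0, hS1]
    exact ⟨rfl, rfl, hinter _ _ (Ne.symm h2)⟩
  · exact absurd rfl h1

lemma SS_compl (A : Finset (Fin 2 × Fin n)) (i : Fin 2) : SS Aᶜ i = (SS A i)ᶜ := by
  ext m; simp [SS]

end Struct
theorem stmt0 (n : ℕ) (hn : 5 ≤ n) (A : Set (Fin 2 × Fin n))
    (hA2 : 2 ≤ A.ncard) (hA2n : A.ncard ≤ 2 * n - 2) :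
    2 * (n - 2) ≤ (cutEdges (K2timesKn n) A).ncard ∧
    ((cutEdges (K2timesKn n) A).ncard = 2 * (n - 2) ↔
      (A.ncard = 2 ∧ Nonempty ((K2timesKn n).induce A ≃g completeGraph (Fin 2))) ∨
      (A.ncard = 2 * n - 2 ∧
        Nonempty ((K2timesKn n).induce Aᶜ ≃g completeGraph (Fin 2)))) := by
  classical
  obtain ⟨F, hF⟩ : ∃ F : Finset (Fin 2 × Fin n), ↑F = A :=
    ⟨A.toFinite.toFinset, A.toFinite.coe_toFinset⟩
  subst hF
  rw [Set.ncard_coe_finset] at hA2 hA2n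
  have hform := cut_formula F
  have hcardF := card_split F
  set a := (SS F 0).card with hadef
  set b := (SS F 1).card with hbdef
  set t := (SS F 0 ∩ SS F 1).card with htdef
  have hta : t ≤ a := Finset.card_le_card Finset.inter_subset_left
  have htb : t ≤ b := Finset.card_le_card Finset.inter_subset_right
  have hunion : (SS F 0 ∪ SS F 1).card + t = a + b :=
    Finset.card_union_add_card_inter _ _
  have hun_le : (SS F 0 ∪ SS F 1).card ≤ n := by
    simpa using Finset.card_le_univ (SS F 0 ∪ SS F 1)
  have ha_le : a ≤ n := by simpa [hadef] using Finset.card_le_univ (SS F 0)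
  have hb_le : b ≤ n := by simpa [hbdef] using Finset.card_le_univ (SS F 1)
  have harith := arith (n := (n : ℤ)) (a := a) (b := b) (t := t)
    (c := ((cutEdges (K2timesKn n) ↑F).ncard : ℤ))
    (by omega) (by omega) (by omega) (by omega) (by omega) (by omega) (by omega)
    (by linarith [hform])
  refine ⟨by omega, ?_, ?_⟩
  · intro heq
    have hceq : ((cutEdges (K2timesKn n) (↑F : Set (Fin 2 × Fin n))).ncard : ℤ)
        = 2 * n - 4 := by omega
    rcases harith.2.mp hceq with ⟨h1, h2, h3⟩ | ⟨h1, h2, h3⟩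
    · obtain ⟨x, y, hadj, hAxy⟩ := pair_of_config (A := F) (by omega) (by omega) (by omega)
      left
      refine ⟨by rw [Set.ncard_coe_finset]; omega, ?_⟩
      rw [hAxy]
      exact iso_of_pair hadj
    · have hSc0 : (SS Fᶜ 0).card = 1 := by
        rw [SS_compl, Finset.card_compl, Fintype.card_fin]; omega
      have hSc1 : (SS Fᶜ 1).card = 1 := by
        rw [SS_compl, Finset.card_compl, Fintype.card_fin]; omega
      have hSct : (SS Fᶜ 0 ∩ SS Fᶜ 1).card = 0 := by
        rw [SS_compl, SS_compl, ← Finset.compl_union, Finset.card_compl,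
          Fintype.card_fin]
        omega
      obtain ⟨x, y, hadj, hAxy⟩ := pair_of_config hSc0 hSc1 hSct
      right
      refine ⟨by rw [Set.ncard_coe_finset]; omega, ?_⟩
      have hcc : (↑F : Set (Fin 2 × Fin n))ᶜ = ({x, y} : Set (Fin 2 × Fin n)) := by
        rw [← Finset.coe_compl, hAxy]
      rw [hcc]
      exact iso_of_pair hadj
  · rintro (⟨hc2, hiso⟩ | ⟨hc2n, hiso⟩)
    · obtain ⟨x, y, hadj, hxy⟩ := pair_of_iso hc2 hiso
      obtain ⟨ha1, hb1, ht1⟩ := config_of_pair hadj hxy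
      rw [← hadef] at ha1
      rw [← hbdef] at hb1
      rw [← htdef] at ht1
      have := harith.2.mpr (Or.inl ⟨by omega, by omega, by omega⟩)
      omega
    · rw [Set.ncard_coe_finset] at hc2n
      have hcompl_card : ((↑F : Set (Fin 2 × Fin n))ᶜ).ncard = 2 := by
        rw [← Finset.coe_compl, Set.ncard_coe_finset, Finset.card_compl]
        simp only [Fintype.card_prod, Fintype.card_fin]
        omega
      obtain ⟨x, y, hadj, hxy⟩ := pair_of_iso hcompl_card hiso
      have hxy' : ↑(Fᶜ) = ({x, y} : Set (Fin 2 × Fin n)) := by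
        rw [Finset.coe_compl]; exact hxy
      obtain ⟨ha1, hb1, ht1⟩ := config_of_pair hadj hxy'
      rw [SS_compl, Finset.card_compl, Fintype.card_fin] at ha1
      rw [SS_compl, Finset.card_compl, Fintype.card_fin] at hb1
      rw [SS_compl, SS_compl, ← Finset.compl_union, Finset.card_compl,
        Fintype.card_fin] at ht1
      have := harith.2.mpr (Or.inr ⟨by omega, by omega, by omega⟩)
      omega
end

section
/- For every integer n ≥ 5, the restricted edge-connectivity of the direct product K₂ × K_n equals 2(n − 2). -/
open SimpleGraph

open Finset

lemma K2Kn_adj {n : ℕ} {x y : Fin 2 × Fin n} :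
    (K2timesKn n).Adj x y ↔ x.1 ≠ y.1 ∧ x.2 ≠ y.2 := Iff.rfl

lemma arith_key (n a b m : ℤ) (hn : 5 ≤ n) (ha : 0 ≤ a) (han : a ≤ n) (hb : 0 ≤ b) (hbn : b ≤ n)
    (hs2 : 2 ≤ a + b) (hs : a + b ≤ 2*n - 2) (hm0 : 0 ≤ m) (hmn : a + b - n ≤ m) :
    2*n - 4 ≤ (a+b)*(n-1) - 2*a*b + 2*m := by
  rcases le_or_gt (a+b) n with h | h
  · nlinarith [mul_nonneg (by linarith : (0:ℤ) ≤ a + b - 2) (by linarith : (0:ℤ) ≤ 2*n - 4 - (a+b)), sq_nonneg (a-b)]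
  · nlinarith [mul_nonneg (by linarith : (0:ℤ) ≤ 2*n - 2 - (a+b)) (by linarith : (0:ℤ) ≤ (a+b) - 4), sq_nonneg (a-b)]

lemma lower (n : ℕ) (hn : 5 ≤ n) (F : Finset (Sym2 (Fin 2 × Fin n)))
    (hF : IsRestrictedEdgeCut (K2timesKn n) ↑F) : 2 * (n - 2) ≤ F.card := by
  classical
  obtain ⟨hFsub, hdisc, hcomp⟩ := hF
  set H := (K2timesKn n).deleteEdges ↑F with hH
  haveI : NeZero n := ⟨by omega⟩
  have hpre : ∃ x y, ¬ H.Reachable x y := by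
    by_contra hcon
    push_neg at hcon
    exact hdisc (SimpleGraph.Connected.mk fun u v => hcon u v)
  obtain ⟨x, y, hxy⟩ := hpre
  set A : Finset (Fin 2 × Fin n) :=
    univ.filter (fun v => H.connectedComponentMk v = H.connectedComponentMk x) with hA
  have hmemA : ∀ v, v ∈ A ↔ H.connectedComponentMk v = H.connectedComponentMk x := by
    intro v; simp [hA]
  have hclosed : ∀ u v, u ∈ A → H.Adj u v → v ∈ A := by
    intro u v hu h
    exact (hmemA v).2 ((ConnectedComponent.eq.2 h.symm.reachable).trans ((hmemA u).1 hu))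
  have hxA : x ∈ A := (hmemA x).2 rfl
  have hyA : y ∉ A := by
    intro h
    exact hxy ((ConnectedComponent.eq.1 ((hmemA y).1 h)).symm)
  -- |A| ≥ 2
  have hA2 : 2 ≤ A.card := by
    obtain ⟨u, hu, v, hv, huv⟩ := hcomp (H.connectedComponentMk x)
    exact Finset.one_lt_card.2 ⟨u, (hmemA u).2 ((ConnectedComponent.mem_supp_iff _ _).1 hu),
      v, (hmemA v).2 ((ConnectedComponent.mem_supp_iff _ _).1 hv), huv⟩
  -- |Aᶜ| ≥ 2
  have hAc2 : 2 ≤ Aᶜ.card := by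
    obtain ⟨u, hu, v, hv, huv⟩ := hcomp (H.connectedComponentMk y)
    have key : ∀ w, H.connectedComponentMk w = H.connectedComponentMk y → w ∉ A := by
      intro w hw hwA
      exact hxy ((ConnectedComponent.eq.1 (hw.symm.trans ((hmemA w).1 hwA))).symm)
    refine Finset.one_lt_card.2 ⟨u, ?_, v, ?_, huv⟩ <;> rw [Finset.mem_compl]
    · exact key u ((ConnectedComponent.mem_supp_iff _ _).1 hu)
    · exact key v ((ConnectedComponent.mem_supp_iff _ _).1 hv)
  have hcardV : Fintype.card (Fin 2 × Fin n) = 2 * n := by simp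
  have hAle : A.card + 2 ≤ 2 * n := by
    have h2 := Finset.card_compl A
    rw [hcardV] at h2
    have h1 := Finset.card_le_univ A
    rw [hcardV] at h1
    omega
  -- split
  set A₀ : Finset (Fin n) := univ.filter (fun j => ((0:Fin 2), j) ∈ A) with hA₀
  set A₁ : Finset (Fin n) := univ.filter (fun j => ((1:Fin 2), j) ∈ A) with hA₁
  have hsplit : A.card = A₀.card + A₁.card := by
    have hAeq : A = A₀.image (fun j => ((0:Fin 2), j)) ∪ A₁.image (fun j => ((1:Fin 2), j)) := by
      ext ⟨i, j⟩
      fin_cases i <;> simp [hA₀, hA₁]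
    rw [hAeq, Finset.card_union_of_disjoint, Finset.card_image_of_injective,
      Finset.card_image_of_injective]
    · intro a b hab; simpa using hab
    · intro a b hab; simpa using hab
    · simp [Finset.disjoint_left]
  set Q₀ : Finset (Fin n × Fin n) := (A₀ ×ˢ A₁ᶜ).filter (fun p => ¬ p.1 = p.2) with hQ₀
  set Q₁ : Finset (Fin n × Fin n) := (A₁ ×ˢ A₀ᶜ).filter (fun p => ¬ p.1 = p.2) with hQ₁
  -- boundary edges are in F
  have hQ₀F : ∀ p ∈ Q₀, s(((0:Fin 2), p.1), ((1:Fin 2), p.2)) ∈ F := by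
    rintro ⟨i, j⟩ hp
    simp only [hQ₀, Finset.mem_filter, Finset.mem_product, Finset.mem_compl] at hp
    obtain ⟨⟨hi, hj⟩, hij⟩ := hp
    by_contra h
    rw [hA₀, Finset.mem_filter] at hi
    have hadj : H.Adj ((0:Fin 2), i) ((1:Fin 2), j) := by
      rw [hH, deleteEdges_adj]
      refine ⟨K2Kn_adj.2 ⟨?_, hij⟩, h⟩
      simp
    exact hj (by simpa [hA₁] using hclosed _ _ hi.2 hadj)
  have hQ₁F : ∀ p ∈ Q₁, s(((1:Fin 2), p.1), ((0:Fin 2), p.2)) ∈ F := by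
    rintro ⟨i, j⟩ hp
    simp only [hQ₁, Finset.mem_filter, Finset.mem_product, Finset.mem_compl] at hp
    obtain ⟨⟨hi, hj⟩, hij⟩ := hp
    by_contra h
    rw [hA₁, Finset.mem_filter] at hi
    have hadj : H.Adj ((1:Fin 2), i) ((0:Fin 2), j) := by
      rw [hH, deleteEdges_adj]
      refine ⟨K2Kn_adj.2 ⟨?_, hij⟩, h⟩
      simp
    exact hj (by simpa [hA₀] using hclosed _ _ hi.2 hadj)
  -- injections into F
  set f₀ : Fin n × Fin n → Sym2 (Fin 2 × Fin n) := fun p => s(((0:Fin 2), p.1), ((1:Fin 2), p.2)) with hf₀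
  set f₁ : Fin n × Fin n → Sym2 (Fin 2 × Fin n) := fun p => s(((1:Fin 2), p.1), ((0:Fin 2), p.2)) with hf₁
  have hinj₀ : Function.Injective f₀ := by
    rintro ⟨a, b⟩ ⟨c, d⟩ h
    simp [hf₀, Sym2.eq_iff, Prod.ext_iff] at h
    simp [Prod.ext_iff, h]
  have hinj₁ : Function.Injective f₁ := by
    rintro ⟨a, b⟩ ⟨c, d⟩ h
    simp [hf₁, Sym2.eq_iff, Prod.ext_iff] at h
    simp [Prod.ext_iff, h]
  have hdisj : Disjoint (Q₀.image f₀) (Q₁.image f₁) := by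
    rw [Finset.disjoint_left]
    rintro e he₀ he₁
    obtain ⟨⟨i, j⟩, hij, rfl⟩ := Finset.mem_image.1 he₀
    obtain ⟨⟨i', j'⟩, hij', heq⟩ := Finset.mem_image.1 he₁
    simp only [hf₀, hf₁, Sym2.eq_iff, Prod.ext_iff] at heq
    rcases heq with ⟨⟨h1, _⟩, _⟩ | ⟨⟨_, h2⟩, ⟨_, h4⟩⟩
    · exact absurd h1 (by decide)
    · simp only [hQ₀, hQ₁, Finset.mem_filter, Finset.mem_product, Finset.mem_compl] at hij hij'
      exact hij'.1.2 (h4 ▸ hij.1.1)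
  have hFge : Q₀.card + Q₁.card ≤ F.card := by
    have hsub : Q₀.image f₀ ∪ Q₁.image f₁ ⊆ F := by
      intro e he
      rcases Finset.mem_union.1 he with h | h
      · obtain ⟨p, hp, rfl⟩ := Finset.mem_image.1 h; exact hQ₀F p hp
      · obtain ⟨p, hp, rfl⟩ := Finset.mem_image.1 h; exact hQ₁F p hp
    calc Q₀.card + Q₁.card
        = (Q₀.image f₀).card + (Q₁.image f₁).card := by
          rw [Finset.card_image_of_injective _ hinj₀, Finset.card_image_of_injective _ hinj₁]
      _ = (Q₀.image f₀ ∪ Q₁.image f₁).card := (Finset.card_union_of_disjoint hdisj).symm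
      _ ≤ F.card := Finset.card_le_card hsub
  -- counting
  have hdiag : ∀ (S T : Finset (Fin n)),
      (S ×ˢ Tᶜ).filter (fun p => p.1 = p.2) = (S \ T).image (fun i => (i, i)) := by
    intro S T
    ext ⟨i, j⟩
    simp only [Finset.mem_filter, Finset.mem_product, Finset.mem_compl, Finset.mem_image,
      Finset.mem_sdiff, Prod.ext_iff]
    constructor
    · rintro ⟨⟨h1, h2⟩, h3⟩; exact ⟨i, ⟨h1, h3 ▸ h2⟩, rfl, h3⟩
    · rintro ⟨a, ⟨h1, h2⟩, rfl, rfl⟩; exact ⟨⟨h1, h2⟩, rfl⟩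
  have hcount : ∀ (S T : Finset (Fin n)),
      ((S ×ˢ Tᶜ).filter (fun p => ¬ p.1 = p.2)).card + (S \ T).card = S.card * (n - T.card) := by
    intro S T
    have h1 := Finset.card_filter_add_card_filter_not (s := S ×ˢ Tᶜ) (fun p => p.1 = p.2)
    rw [hdiag S T, Finset.card_image_of_injective _ (fun a b hab => (Prod.ext_iff.1 hab).1),
      Finset.card_product, Finset.card_compl, Fintype.card_fin] at h1
    omega
  have e0 := hcount A₀ A₁
  have e1 := hcount A₁ A₀
  rw [← hQ₀] at e0
  rw [← hQ₁] at e1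
  set a := A₀.card with ha
  set b := A₁.card with hb
  set m := (A₀ ∩ A₁).card with hm
  have e2 : (A₀ \ A₁).card + m = a := Finset.card_sdiff_add_card_inter A₀ A₁
  have e3 : (A₁ \ A₀).card + m = b := by
    rw [hm, Finset.inter_comm]; exact Finset.card_sdiff_add_card_inter A₁ A₀
  have e4 : m + (A₀ ∪ A₁).card = a + b := Finset.card_inter_add_card_union A₀ A₁
  have e5 : (A₀ ∪ A₁).card ≤ n := by
    have := Finset.card_le_univ (A₀ ∪ A₁); simpa using this
  have e6 : a ≤ n := by have := Finset.card_le_univ A₀; simpa [ha] using this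
  have e7 : b ≤ n := by have := Finset.card_le_univ A₁; simpa [hb] using this
  have hab2 : 2 ≤ a + b := hsplit ▸ hA2
  have habn : a + b + 2 ≤ 2 * n := by rw [← hsplit]; exact hAle
  have hmn' : a + b ≤ m + n := by omega
  have key := arith_key n a b m (by exact_mod_cast hn) (Nat.cast_nonneg a) (Nat.cast_le.2 e6)
    (Nat.cast_nonneg b) (Nat.cast_le.2 e7) (by exact_mod_cast hab2)
    (by push_cast; omega) (Nat.cast_nonneg m) (by push_cast; omega)
  zify [e6, e7, show 2 ≤ n by omega] at e0 e1 hFge ⊢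
  push_cast at e2 e3
  linarith [key, e0, e1, e2, e3, hFge]

lemma upper (n : ℕ) (hn : 5 ≤ n) : ∃ F : Finset (Sym2 (Fin 2 × Fin n)),
    IsRestrictedEdgeCut (K2timesKn n) ↑F ∧ F.card = 2 * (n - 2) := by
  classical
  set z0 : Fin n := ⟨0, by omega⟩ with hz0
  set z1 : Fin n := ⟨1, by omega⟩ with hz1
  set z2 : Fin n := ⟨2, by omega⟩ with hz2
  set v0 : Fin 2 × Fin n := ((0:Fin 2), z0) with hv0
  set v1 : Fin 2 × Fin n := ((1:Fin 2), z1) with hv1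
  have hne01 : v0 ≠ v1 := by simp [hv0, hv1]
  set F : Finset (Sym2 (Fin 2 × Fin n)) :=
    ((univ.filter (fun j : Fin n => j ≠ z0 ∧ j ≠ z1)).image (fun j => s(v0, ((1:Fin 2), j)))) ∪
    ((univ.filter (fun i : Fin n => i ≠ z0 ∧ i ≠ z1)).image (fun i => s(v1, ((0:Fin 2), i)))) with hFdef
  have hmemF : ∀ e, e ∈ F ↔ (∃ j, (j ≠ z0 ∧ j ≠ z1) ∧ s(v0, ((1:Fin 2), j)) = e) ∨
      (∃ i, (i ≠ z0 ∧ i ≠ z1) ∧ s(v1, ((0:Fin 2), i)) = e) := by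
    intro e; simp [hFdef]
  set H := (K2timesKn n).deleteEdges ↑F with hH
  -- F is a set of edges
  have hFsub : ↑F ⊆ (K2timesKn n).edgeSet := by
    intro e he
    rw [Finset.mem_coe, hmemF] at he
    rcases he with ⟨j, ⟨hj0, _⟩, rfl⟩ | ⟨i, ⟨_, hi1⟩, rfl⟩
    · rw [mem_edgeSet]
      refine K2Kn_adj.2 ⟨by simp [hv0], ?_⟩
      simpa [hv0] using fun h => hj0 h.symm
    · rw [mem_edgeSet]
      refine K2Kn_adj.2 ⟨by simp [hv1], ?_⟩
      simpa [hv1] using fun h => hi1 h.symm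
  -- the edge v0v1 is not deleted
  have he0 : s(v0, v1) ∉ F := by
    rw [hmemF]
    rintro (⟨j, ⟨hj0, hj1⟩, heq⟩ | ⟨i, ⟨hi0, hi1⟩, heq⟩) <;>
      rw [Sym2.eq_iff] at heq
    · rcases heq with ⟨_, h2⟩ | ⟨h1, _⟩
      · exact hj1 (by simpa [hv1, Prod.ext_iff] using h2)
      · exact hne01 h1
    · rcases heq with ⟨h1, _⟩ | ⟨_, h2⟩
      · exact hne01 h1.symm
      · exact hi0 (by simpa [hv0, Prod.ext_iff] using h2)
  have hadj01 : H.Adj v0 v1 := by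
    rw [hH, deleteEdges_adj]
    refine ⟨K2Kn_adj.2 ⟨by simp [hv0, hv1], ?_⟩, he0⟩
    simp [hv0, hv1, hz0, hz1, Fin.ext_iff]
  -- step lemma
  have hstep : ∀ u w, (u = v0 ∨ u = v1) → H.Adj u w → (w = v0 ∨ w = v1) := by
    rintro u ⟨w1, w2⟩ hu hadj
    rw [hH, deleteEdges_adj, K2Kn_adj] at hadj
    obtain ⟨⟨h1, h2⟩, hnm⟩ := hadj
    rcases hu with rfl | rfl
    · have hw1 : w1 = 1 := by
        simp only [hv0] at h1
        fin_cases w1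
        · simp at h1
        · rfl
      subst hw1
      by_cases hw2 : w2 = z1
      · right; rw [hv1, hw2]
      · exfalso
        apply hnm
        rw [Finset.mem_coe, hmemF]
        left
        exact ⟨w2, ⟨fun h => h2 (by simp [hv0, h]), hw2⟩, rfl⟩
    · have hw1 : w1 = 0 := by
        simp only [hv1] at h1
        fin_cases w1
        · rfl
        · simp at h1
      subst hw1
      by_cases hw2 : w2 = z0
      · left; rw [hv0, hw2]
      · exfalso
        apply hnm
        rw [Finset.mem_coe, hmemF]
        right
        exact ⟨w2, ⟨hw2, fun h => h2 (by simp [hv1, h])⟩, rfl⟩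
  have hreach : ∀ u w, H.Reachable u w → (u = v0 ∨ u = v1) → (w = v0 ∨ w = v1) := by
    intro u w hr
    obtain ⟨p⟩ := hr
    induction p with
    | nil => exact id
    | cons h p ih => exact fun hu => ih (hstep _ _ hu h)
  -- not connected
  have hnc : ¬ H.Connected := by
    intro hc
    have := hreach v0 ((0:Fin 2), z2) (hc.preconnected v0 _) (Or.inl rfl)
    rcases this with h | h <;>
      simp [hv0, hv1, hz0, hz1, hz2, Prod.ext_iff, Fin.ext_iff] at h
  -- all components nontrivial
  have hcomps : ∀ c : H.ConnectedComponent, c.supp.Nontrivial := by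
    intro c
    obtain ⟨x, rfl⟩ := c.exists_rep
    rw [show Quot.mk H.Reachable x = H.connectedComponentMk x from rfl]
    by_cases hx : x = v0 ∨ x = v1
    · refine ⟨v0, ?_, v1, ?_, hne01⟩ <;> rw [ConnectedComponent.mem_supp_iff, ConnectedComponent.eq]
      · rcases hx with rfl | rfl
        · exact Reachable.refl _
        · exact hadj01.reachable
      · rcases hx with rfl | rfl
        · exact hadj01.symm.reachable
        · exact Reachable.refl _
    · push_neg at hx
      obtain ⟨hx0, hx1⟩ := hx
      obtain ⟨x1, x2⟩ := x
      have hk : (univ \ {x2, z0, z1} : Finset (Fin n)).Nonempty := by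
        rw [← Finset.card_pos, Finset.card_sdiff_of_subset (Finset.subset_univ _)]
        have h3 : ({x2, z0, z1} : Finset (Fin n)).card ≤ 3 :=
          (Finset.card_insert_le _ _).trans (by have := Finset.card_insert_le z0 {z1}; simp at this ⊢; omega)
        have := Finset.card_le_univ ({x2, z0, z1} : Finset (Fin n))
        simp only [Finset.card_univ, Fintype.card_fin] at *
        omega
      obtain ⟨k, hk⟩ := hk
      simp only [Finset.mem_sdiff, Finset.mem_univ, Finset.mem_insert, Finset.mem_singleton,
        true_and, not_or] at hk
      obtain ⟨hkx, hk0, hk1⟩ := hk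
      have hFv : ∀ e ∈ F, v0 ∈ e ∨ v1 ∈ e := by
        intro e he
        rw [hmemF] at he
        rcases he with ⟨j, _, rfl⟩ | ⟨i, _, rfl⟩
        · left; simp
        · right; simp
      fin_cases x1
      · -- x = (0, x2), x2 ≠ z0
        have hx2 : x2 ≠ z0 := fun h => hx0 (by simp [hv0, h])
        set y : Fin 2 × Fin n := ((1:Fin 2), k) with hy
        have hyv0 : y ≠ v0 := by simp [hy, hv0]
        have hyv1 : y ≠ v1 := by simp [hy, hv1, hk1]
        have hadj : H.Adj ((0:Fin 2), x2) y := by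
          rw [hH, deleteEdges_adj]
          refine ⟨K2Kn_adj.2 ⟨by simp [hy], by simpa [hy] using fun h => hkx h.symm⟩, ?_⟩
          intro hmem
          rcases hFv _ hmem with h | h <;> rw [Sym2.mem_iff] at h
          · rcases h with h | h
            · exact hx0 h.symm
            · exact hyv0 h.symm
          · rcases h with h | h
            · exact hx1 h.symm
            · exact hyv1 h.symm
        refine ⟨_, ConnectedComponent.mem_supp_iff _ _ |>.2 rfl, y, ?_, ?_⟩
        · exact ConnectedComponent.mem_supp_iff _ _ |>.2 (ConnectedComponent.eq.2 hadj.symm.reachable)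
        · simp [hy]
      · -- x = (1, x2), x2 ≠ z1
        have hx2 : x2 ≠ z1 := fun h => hx1 (by simp [hv1, h])
        set y : Fin 2 × Fin n := ((0:Fin 2), k) with hy
        have hyv0 : y ≠ v0 := by simp [hy, hv0, hk0]
        have hyv1 : y ≠ v1 := by simp [hy, hv1]
        have hadj : H.Adj ((1:Fin 2), x2) y := by
          rw [hH, deleteEdges_adj]
          refine ⟨K2Kn_adj.2 ⟨by simp [hy], by simpa [hy] using fun h => hkx h.symm⟩, ?_⟩
          intro hmem
          rcases hFv _ hmem with h | h <;> rw [Sym2.mem_iff] at h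
          · rcases h with h | h
            · exact hx0 h.symm
            · exact hyv0 h.symm
          · rcases h with h | h
            · exact hx1 h.symm
            · exact hyv1 h.symm
        refine ⟨_, ConnectedComponent.mem_supp_iff _ _ |>.2 rfl, y, ?_, ?_⟩
        · exact ConnectedComponent.mem_supp_iff _ _ |>.2 (ConnectedComponent.eq.2 hadj.symm.reachable)
        · simp [hy]
  -- cardinality
  have hfilt : (univ.filter (fun j : Fin n => j ≠ z0 ∧ j ≠ z1)).card = n - 2 := by
    have : (univ.filter (fun j : Fin n => j ≠ z0 ∧ j ≠ z1)) = univ \ {z0, z1} := by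
      ext j; simp [not_or]
    rw [this, Finset.card_sdiff_of_subset (Finset.subset_univ _)]
    have : ({z0, z1} : Finset (Fin n)).card = 2 := by
      rw [Finset.card_insert_of_notMem (by simp [hz0, hz1, Fin.ext_iff]), Finset.card_singleton]
    simp [this]
  have hinj0 : Function.Injective (fun j : Fin n => s(v0, ((1:Fin 2), j))) := by
    intro a b h
    simp only [Sym2.eq_iff, Prod.ext_iff, hv0] at h
    rcases h with ⟨_, _, h⟩ | ⟨⟨h, _⟩, _⟩
    · exact h
    · exact absurd h (by simp)
  have hinj1 : Function.Injective (fun i : Fin n => s(v1, ((0:Fin 2), i))) := by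
    intro a b h
    simp only [Sym2.eq_iff, Prod.ext_iff, hv1] at h
    rcases h with ⟨_, _, h⟩ | ⟨⟨h, _⟩, _⟩
    · exact h
    · exact absurd h (by simp)
  have hdisj : Disjoint
      ((univ.filter (fun j : Fin n => j ≠ z0 ∧ j ≠ z1)).image (fun j => s(v0, ((1:Fin 2), j))))
      ((univ.filter (fun i : Fin n => i ≠ z0 ∧ i ≠ z1)).image (fun i => s(v1, ((0:Fin 2), i)))) := by
    rw [Finset.disjoint_left]
    rintro e he0 he1
    obtain ⟨j, hj, rfl⟩ := Finset.mem_image.1 he0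
    obtain ⟨i, hi, heq⟩ := Finset.mem_image.1 he1
    simp only [Finset.mem_filter] at hj hi
    rw [Sym2.eq_iff] at heq
    rcases heq with ⟨h1, _⟩ | ⟨_, h2⟩
    · exact hne01 h1.symm
    · exact hi.2.1 (by simpa [hv0, Prod.ext_iff] using h2)
  have hcard : F.card = 2 * (n - 2) := by
    rw [hFdef, Finset.card_union_of_disjoint hdisj, Finset.card_image_of_injective _ hinj0,
      Finset.card_image_of_injective _ hinj1, hfilt]
    omega
  exact ⟨F, ⟨hFsub, hnc, hcomps⟩, hcard⟩

theorem stmt4 (n : ℕ) (hn : 5 ≤ n) :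
    restrictedEdgeConn (K2timesKn n) = ((2 * (n - 2) : ℕ) : ℕ∞) := by
  obtain ⟨F, hF, hcard⟩ := upper n hn
  unfold restrictedEdgeConn
  refine le_antisymm (sInf_le ⟨F, hF, by rw [hcard]⟩) (le_sInf ?_)
  rintro k ⟨F', hF', rfl⟩
  exact_mod_cast lower n hn F' hF'
end

section
/- Let n ≥ 3 be an integer and let 𝒢 = K₂ × T_n, the direct product of K₂ with the total graph T_n; equivalently, 𝒢 is the complete bipartite graph K_{n,n}. Then for every vertex subset A of 𝒢 with 2 ≤ |A| ≤ 2n − 2, the number of edges of 𝒢 with exactly one endpoint in A satisfies |[A, V(𝒢) \ A]| ≥ 2(n − 1); moreover, equality holds if and only if either (i) |A| = 2 and the subgraph of 𝒢 induced by A is isomorphic to K₂, or (ii) |A| = 2n − 2 and the subgraph of 𝒢 induced by V(𝒢) \ A is isomorphic to K₂. -/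
open SimpleGraph

open Finset

section Helpers

variable {n : ℕ}

/-- The set of second coordinates of elements of `B` with first coordinate `i`. -/
noncomputable def sideF (i : Fin 2) (B : Set (Fin 2 × Fin n)) : Finset (Fin n) :=
  Set.Finite.toFinset (Set.toFinite {u | (i, u) ∈ B})

@[simp] lemma mem_sideF {i : Fin 2} {B : Set (Fin 2 × Fin n)} {u : Fin n} :
    u ∈ sideF i B ↔ (i, u) ∈ B := by simp [sideF]

lemma K2Tn_adj {x y : Fin 2 × Fin n} : (K2timesTn n).Adj x y ↔ x.1 ≠ y.1 := Iff.rfl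

lemma ncard_side (B : Set (Fin 2 × Fin n)) :
    B.ncard = (sideF 0 B).card + (sideF 1 B).card := by
  classical
  have hB : B = ↑(((sideF 0 B).image (fun u => ((0 : Fin 2), u))) ∪
      ((sideF 1 B).image (fun u => ((1 : Fin 2), u)))) := by
    ext ⟨i, u⟩
    fin_cases i <;> simp [Prod.ext_iff]
  have hdisj : Disjoint ((sideF 0 B).image (fun u => ((0 : Fin 2), u)))
      ((sideF 1 B).image (fun u => ((1 : Fin 2), u))) := by
    rw [Finset.disjoint_left]
    rintro ⟨i, u⟩ h1 h2
    simp only [Finset.mem_image] at h1 h2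
    obtain ⟨x, -, hx⟩ := h1
    obtain ⟨y, -, hy⟩ := h2
    rw [← hx] at hy
    simpa [Prod.ext_iff] using hy
  conv_lhs => rw [hB]
  rw [Set.ncard_coe_finset, Finset.card_union_of_disjoint hdisj,
    Finset.card_image_of_injective _ (fun x y h => by simpa [Prod.ext_iff] using h),
    Finset.card_image_of_injective _ (fun x y h => by simpa [Prod.ext_iff] using h)]

/-- Encode a bipartite edge. -/
def edg (p : Fin n × Fin n) : Sym2 (Fin 2 × Fin n) := s(((0 : Fin 2), p.1), ((1 : Fin 2), p.2))

lemma edg_injective : Function.Injective (edg (n := n)) := by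
  rintro ⟨u, v⟩ ⟨u', v'⟩ h
  rw [edg, edg, Sym2.eq_iff] at h
  rcases h with ⟨h1, h2⟩ | ⟨h1, h2⟩
  · simp_all [Prod.ext_iff]
  · simp [Prod.ext_iff] at h1

noncomputable def cutF (B : Set (Fin 2 × Fin n)) : Finset (Fin n × Fin n) :=
  (sideF 0 B ×ˢ (sideF 1 B)ᶜ) ∪ ((sideF 0 B)ᶜ ×ˢ sideF 1 B)

lemma cut_eq (B : Set (Fin 2 × Fin n)) :
    cutEdges (K2timesTn n) B = ↑((cutF B).image edg) := by
  ext e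
  constructor
  · rintro ⟨he, u, v, rfl, hu, hv⟩
    rw [SimpleGraph.mem_edgeSet, K2Tn_adj] at he
    obtain ⟨u1, u2⟩ := u
    obtain ⟨v1, v2⟩ := v
    simp only [Finset.coe_image, Set.mem_image, Finset.mem_coe]
    have hcase := (by decide : ∀ i j : Fin 2, i ≠ j → (i = 0 ∧ j = 1) ∨ (i = 1 ∧ j = 0)) u1 v1 he
    rcases hcase with ⟨rfl, rfl⟩ | ⟨rfl, rfl⟩
    · exact ⟨(u2, v2), by simp [cutF, hu, hv], rfl⟩
    · exact ⟨(v2, u2), by simp [cutF, hu, hv], (Sym2.eq_swap)⟩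
  · intro h
    simp only [Finset.coe_image, Set.mem_image, Finset.mem_coe] at h
    obtain ⟨⟨p1, p2⟩, hp, rfl⟩ := h
    simp only [cutF, Finset.mem_union, Finset.mem_product, Finset.mem_compl, mem_sideF] at hp
    refine ⟨?_, ?_⟩
    · show s(((0 : Fin 2), p1), ((1 : Fin 2), p2)) ∈ (K2timesTn n).edgeSet
      rw [SimpleGraph.mem_edgeSet, K2Tn_adj]
      simp
    rcases hp with ⟨h1, h2⟩ | ⟨h1, h2⟩
    · exact ⟨((0 : Fin 2), p1), ((1 : Fin 2), p2), rfl, h1, h2⟩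
    · exact ⟨((1 : Fin 2), p2), ((0 : Fin 2), p1), Sym2.eq_swap, h2, h1⟩

lemma cut_card (B : Set (Fin 2 × Fin n)) :
    (cutEdges (K2timesTn n) B).ncard =
      (sideF 0 B).card * (n - (sideF 1 B).card) + (n - (sideF 0 B).card) * (sideF 1 B).card := by
  classical
  rw [cut_eq, Set.ncard_coe_finset, Finset.card_image_of_injective _ edg_injective]
  have hdisj : Disjoint (sideF 0 B ×ˢ (sideF 1 B)ᶜ) ((sideF 0 B)ᶜ ×ˢ sideF 1 B) := by
    rw [Finset.disjoint_left]
    rintro ⟨p1, p2⟩ h1 h2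
    simp only [Finset.mem_product, Finset.mem_compl] at h1 h2
    exact h2.1 h1.1
  rw [cutF, Finset.card_union_of_disjoint hdisj, Finset.card_product, Finset.card_product,
    Finset.card_compl, Finset.card_compl, Fintype.card_fin]

lemma numericZ (N a b : ℤ) (hn : 3 ≤ N) (ha0 : 0 ≤ a) (hb0 : 0 ≤ b) (ha : a ≤ N) (hb : b ≤ N)
    (h2 : 2 ≤ a + b) (h2n : a + b ≤ 2 * N - 2) :
    2 * (N - 1) ≤ a * (N - b) + (N - a) * b ∧
    (a * (N - b) + (N - a) * b = 2 * (N - 1) ↔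
      (a = 1 ∧ b = 1) ∨ (a = N - 1 ∧ b = N - 1)) := by
  have key : 2 * (a * (N - b) + (N - a) * b) =
      (a - b) ^ 2 + (a + b - 2) * ((2 * N - 2) - (a + b)) + 4 * (N - 1) := by ring
  have n1 : 0 ≤ (a - b) ^ 2 := sq_nonneg _
  have n2 : 0 ≤ (a + b - 2) * ((2 * N - 2) - (a + b)) :=
    mul_nonneg (by omega) (by omega)
  refine ⟨by linarith, ?_, ?_⟩
  · intro h
    have hz : (a - b) ^ 2 + (a + b - 2) * ((2 * N - 2) - (a + b)) = 0 := by linarith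
    have hsq : (a - b) ^ 2 = 0 := le_antisymm (by linarith) n1
    have hab : a = b := by
      have := pow_eq_zero_iff (n := 2) (by norm_num) |>.mp hsq
      omega
    have hprod : (a + b - 2) * ((2 * N - 2) - (a + b)) = 0 := by linarith
    rcases mul_eq_zero.mp hprod with h' | h' <;> omega
  · rintro (⟨rfl, rfl⟩ | ⟨rfl, rfl⟩) <;> ring

lemma numericN (N a b : ℕ) (hn : 3 ≤ N) (ha : a ≤ N) (hb : b ≤ N)
    (h2 : 2 ≤ a + b) (h2n : a + b ≤ 2 * N - 2) :
    2 * (N - 1) ≤ a * (N - b) + (N - a) * b ∧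
    (a * (N - b) + (N - a) * b = 2 * (N - 1) ↔
      (a = 1 ∧ b = 1) ∨ (a = N - 1 ∧ b = N - 1)) := by
  have h1 : (1 : ℕ) ≤ N := by omega
  have h2' : (2 : ℕ) ≤ 2 * N := by omega
  zify [ha, hb, h1, h2'] at h2n ⊢
  exact numericZ N a b (by exact_mod_cast hn) (by positivity) (by positivity)
    (by exact_mod_cast ha) (by exact_mod_cast hb) (by exact_mod_cast h2) h2n

lemma pair_iso (p q : Fin 2 × Fin n) (hpq : p.1 ≠ q.1) :
    Nonempty ((K2timesTn n).induce {p, q} ≃g completeGraph (Fin 2)) := by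
  classical
  have hne : p ≠ q := fun h => hpq (by rw [h])
  let f : ({p, q} : Set (Fin 2 × Fin n)) → Fin 2 := fun x => x.val.1
  have hinj : Function.Injective f := by
    rintro ⟨x, hx⟩ ⟨y, hy⟩ h
    simp only [Set.mem_insert_iff, Set.mem_singleton_iff] at hx hy
    apply Subtype.ext
    rcases hx with rfl | rfl <;> rcases hy with rfl | rfl <;>
      first
        | rfl
        | exact absurd h hpq
        | exact absurd h.symm hpq
  have hsurj : Function.Surjective f := by
    intro i
    have : i = p.1 ∨ i = q.1 :=
      (by decide : ∀ i a b : Fin 2, a ≠ b → i = a ∨ i = b) i p.1 q.1 hpq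
    rcases this with rfl | rfl
    · exact ⟨⟨p, Or.inl rfl⟩, rfl⟩
    · exact ⟨⟨q, Or.inr rfl⟩, rfl⟩
  exact ⟨{ toEquiv := Equiv.ofBijective f ⟨hinj, hsurj⟩, map_rel_iff' := Iff.rfl }⟩

lemma set_eq_pair (B : Set (Fin 2 × Fin n)) {u v : Fin n}
    (h0 : sideF 0 B = {u}) (h1 : sideF 1 B = {v}) :
    B = {((0 : Fin 2), u), ((1 : Fin 2), v)} := by
  ext ⟨i, w⟩
  have e0 : ∀ w : Fin n, ((0 : Fin 2), w) ∈ B ↔ w = u := by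
    intro w; rw [← mem_sideF, h0, Finset.mem_singleton]
  have e1 : ∀ w : Fin n, ((1 : Fin 2), w) ∈ B ↔ w = v := by
    intro w; rw [← mem_sideF, h1, Finset.mem_singleton]
  fin_cases i <;> simp [e0, e1, Prod.ext_iff]

lemma sideF_compl (B : Set (Fin 2 × Fin n)) (i : Fin 2) :
    sideF i Bᶜ = (sideF i B)ᶜ := by
  ext w; simp

lemma iso_gives (B : Set (Fin 2 × Fin n))
    (h : Nonempty ((K2timesTn n).induce B ≃g completeGraph (Fin 2))) :
    (sideF 0 B).Nonempty ∧ (sideF 1 B).Nonempty := by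
  obtain ⟨e⟩ := h
  have hadj01 : (completeGraph (Fin 2)).Adj 0 1 := by
    simp [completeGraph]
  have hadj : ((K2timesTn n).induce B).Adj (e.symm 0) (e.symm 1) :=
    e.symm.map_rel_iff.mpr hadj01
  have hG : (K2timesTn n).Adj (e.symm 0).val (e.symm 1).val := hadj
  rw [K2Tn_adj] at hG
  set x := (e.symm 0) with hx
  set y := (e.symm 1) with hy
  have hxB : (x : Fin 2 × Fin n) ∈ B := x.prop
  have hyB : (y : Fin 2 × Fin n) ∈ B := y.prop
  have hcase := (by decide : ∀ i j : Fin 2, i ≠ j → (i = 0 ∧ j = 1) ∨ (i = 1 ∧ j = 0))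
    (x : Fin 2 × Fin n).1 (y : Fin 2 × Fin n).1 hG
  rcases hcase with ⟨h1, h2⟩ | ⟨h1, h2⟩
  · exact ⟨⟨(x : Fin 2 × Fin n).2, by rw [mem_sideF, ← h1]; exact hxB⟩,
      ⟨(y : Fin 2 × Fin n).2, by rw [mem_sideF, ← h2]; exact hyB⟩⟩
  · exact ⟨⟨(y : Fin 2 × Fin n).2, by rw [mem_sideF, ← h2]; exact hyB⟩,
      ⟨(x : Fin 2 × Fin n).2, by rw [mem_sideF, ← h1]; exact hxB⟩⟩

end Helpers

theorem stmt5 (n : ℕ) (hn : 3 ≤ n) (A : Set (Fin 2 × Fin n))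
    (hA2 : 2 ≤ A.ncard) (hA2n : A.ncard ≤ 2 * n - 2) :
    2 * (n - 1) ≤ (cutEdges (K2timesTn n) A).ncard ∧
    ((cutEdges (K2timesTn n) A).ncard = 2 * (n - 1) ↔
      (A.ncard = 2 ∧ Nonempty ((K2timesTn n).induce A ≃g completeGraph (Fin 2))) ∨
      (A.ncard = 2 * n - 2 ∧
        Nonempty ((K2timesTn n).induce Aᶜ ≃g completeGraph (Fin 2)))) := by
  classical
  have hA : A.ncard = (sideF 0 A).card + (sideF 1 A).card := ncard_side A
  set a := (sideF 0 A).card with ha_def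
  set b := (sideF 1 A).card with hb_def
  have ha : a ≤ n := by
    calc a ≤ Fintype.card (Fin n) := Finset.card_le_univ _
    _ = n := Fintype.card_fin n
  have hb : b ≤ n := by
    calc b ≤ Fintype.card (Fin n) := Finset.card_le_univ _
    _ = n := Fintype.card_fin n
  have hcut : (cutEdges (K2timesTn n) A).ncard = a * (n - b) + (n - a) * b := cut_card A
  have num := numericN n a b hn ha hb (by omega) (by omega)
  refine ⟨by rw [hcut]; exact num.1, ?_⟩
  rw [hcut, num.2]
  constructor
  · rintro (⟨ha1, hb1⟩ | ⟨han, hbn⟩)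
    · left
      refine ⟨by omega, ?_⟩
      obtain ⟨u, hu⟩ := Finset.card_eq_one.mp ha1
      obtain ⟨v, hv⟩ := Finset.card_eq_one.mp hb1
      rw [set_eq_pair A hu hv]
      exact pair_iso _ _ (by simp)
    · right
      refine ⟨by omega, ?_⟩
      have h0 : (sideF 0 Aᶜ).card = 1 := by
        rw [sideF_compl, Finset.card_compl, Fintype.card_fin, ← ha_def]; omega
      have h1 : (sideF 1 Aᶜ).card = 1 := by
        rw [sideF_compl, Finset.card_compl, Fintype.card_fin, ← hb_def]; omega
      obtain ⟨u, hu⟩ := Finset.card_eq_one.mp h0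
      obtain ⟨v, hv⟩ := Finset.card_eq_one.mp h1
      rw [set_eq_pair Aᶜ hu hv]
      exact pair_iso _ _ (by simp)
  · rintro (⟨h2, hiso⟩ | ⟨h2n', hiso⟩)
    · obtain ⟨hx, hy⟩ := iso_gives A hiso
      have h1 : 1 ≤ a := Finset.card_pos.mpr hx
      have h2' : 1 ≤ b := Finset.card_pos.mpr hy
      left; omega
    · obtain ⟨hx, hy⟩ := iso_gives Aᶜ hiso
      have h0c : 1 ≤ (sideF 0 Aᶜ).card := Finset.card_pos.mpr hx
      have h1c : 1 ≤ (sideF 1 Aᶜ).card := Finset.card_pos.mpr hy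
      rw [sideF_compl, Finset.card_compl, Fintype.card_fin, ← ha_def] at h0c
      rw [sideF_compl, Finset.card_compl, Fintype.card_fin, ← hb_def] at h1c
      right; omega
end
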